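/- arXiv:math/0702465 — 5 statements merged into one kernel-verified Lean document; each statement's English description precedes it below -/
import Mathlib

section
/- Let V be a real inner product space and L : V → V a symmetric linear operator (⟨Lx, y⟩ = ⟨x, Ly⟩ for all x, y ∈ V). Suppose v₀, v₁ ∈ V are unit vectors and c₀ ≥ 0, c₁ ≥ 0, c₂ ∈ ℝ are constants such that L v₀ = −c₀ v₀, ⟨v₀, v₁⟩² = c₂, and ⟨Lw, w⟩ ≥ c₁‖w‖² for every w ∈ V with ⟨w, v₀⟩ = 0. Then every v ∈ V with ⟨v, v₁⟩ = 0 satisfies ⟨Lv, v⟩ ≥ (c₁c₂ − c₀(1 − c₂))‖v‖². -/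
open RealInnerProductSpace

/-- Lemma on lower bounds for symmetric operators under a change of
orthogonality constraint (Lemma `l:lina` in the paper). -/
theorem symmetric_operator_lower_bound
    {V : Type*} [NormedAddCommGroup V] [InnerProductSpace ℝ V]
    (L : V →ₗ[ℝ] V) (hsym : ∀ x y : V, ⟪L x, y⟫ = ⟪x, L y⟫)
    (v₀ v₁ : V) (hv₀ : ‖v₀‖ = 1) (hv₁ : ‖v₁‖ = 1)
    (c₀ c₁ c₂ : ℝ) (hc₀ : 0 ≤ c₀) (hc₁ : 0 ≤ c₁)
    (hLv₀ : L v₀ = (-c₀) • v₀)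
    (hc₂ : ⟪v₀, v₁⟫ ^ 2 = c₂)
    (hlow : ∀ w : V, ⟪w, v₀⟫ = 0 → ⟪L w, w⟫ ≥ c₁ * ‖w‖ ^ 2)
    (v : V) (hv : ⟪v, v₁⟫ = 0) :
    ⟪L v, v⟫ ≥ (c₁ * c₂ - c₀ * (1 - c₂)) * ‖v‖ ^ 2 := by
  set a : ℝ := ⟪v, v₀⟫ with ha
  set w : V := v - a • v₀ with hw
  have hn0 : ⟪v₀, v₀⟫ = (1 : ℝ) := by
    rw [real_inner_self_eq_norm_sq, hv₀]; ring
  have hn1 : ⟪v₁, v₁⟫ = (1 : ℝ) := by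
    rw [real_inner_self_eq_norm_sq, hv₁]; ring
  have hwv₀ : ⟪w, v₀⟫ = 0 := by
    simp [hw, inner_sub_left, real_inner_smul_left, hn0, ha, hv₀]
  -- norm of w
  have hnw : ‖w‖ ^ 2 = ‖v‖ ^ 2 - a ^ 2 := by
    have : ⟪w, w⟫ = ⟪v, v⟫ - a ^ 2 := by
      simp only [hw, inner_sub_left, inner_sub_right, real_inner_smul_left,
        real_inner_smul_right, hn0, real_inner_comm v v₀, ← ha]
      ring
    rw [← real_inner_self_eq_norm_sq, ← real_inner_self_eq_norm_sq, this]
  -- L v decomposition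
  have hLwv₀ : ⟪L w, v₀⟫ = 0 := by
    rw [hsym, hLv₀, real_inner_smul_right, hwv₀]; ring
  have h1 : ⟪L v, v₀⟫ = -c₀ * a := by
    rw [hsym, hLv₀, real_inner_smul_right, ← ha]
  have h2 : ⟪v₀, v⟫ = a := by rw [real_inner_comm, ← ha]
  have hLvv : ⟪L v, v⟫ = ⟪L w, w⟫ - c₀ * a ^ 2 := by
    rw [hw]
    have hLw2 : L (v - a • v₀) = L v - a • L v₀ := by simp
    rw [hLw2, hLv₀]
    simp only [inner_sub_left, inner_sub_right, real_inner_smul_left,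
      real_inner_smul_right, smul_smul, hn0, h1, h2]
    ring
  have hLw : ⟪L w, w⟫ ≥ c₁ * ‖w‖ ^ 2 := hlow w hwv₀
  -- bound on a²
  set b : ℝ := ⟪v₀, v₁⟫ with hb
  set u : V := v₀ - b • v₁ with hu
  have hvu : ⟪v, u⟫ = a := by
    simp [hu, inner_sub_right, real_inner_smul_right, hv, ← ha]
  have hnu : ⟪u, u⟫ = 1 - c₂ := by
    rw [← hc₂]
    simp only [hu, inner_sub_left, inner_sub_right, real_inner_smul_left,
      real_inner_smul_right, hn0, hn1, ← hb]
    have h3 : ⟪v₁, v₀⟫ = b := by rw [real_inner_comm, hb]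
    rw [h3]; ring
  have hcs : ⟪v, u⟫ * ⟪v, u⟫ ≤ ⟪v, v⟫ * ⟪u, u⟫ := real_inner_mul_inner_self_le v u
  have ha2 : a ^ 2 ≤ (1 - c₂) * ‖v‖ ^ 2 := by
    rw [hvu, hnu, real_inner_self_eq_norm_sq] at hcs
    nlinarith
  have hc₂1 : 0 ≤ 1 - c₂ := by
    have := (real_inner_self_nonneg : (0:ℝ) ≤ ⟪u, u⟫)
    rw [hnu] at this; linarith
  nlinarith [hnw, hLw, hLvv, sq_nonneg a, sq_nonneg ‖v‖, sq_nonneg ‖w‖]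
end

section
/- Let q be a nonzero real number and let b, w : [0, ∞) → ℝ be continuously differentiable functions satisfying |b'(t)| ≤ |w(t)| and |w'(t)| ≤ |q| |b(t)| for all t ≥ 0. Then for all t ≥ 0: |b(t)| ≤ √2 · max(|q|^{1/2}|b(0)|, |w(0)|) · |q|^{−1/2} · exp(|q|^{1/2} t) and |w(t)| ≤ √2 · max(|q|^{1/2}|b(0)|, |w(0)|) · exp(|q|^{1/2} t). -/
/-- The Gronwall estimate \eqref{E:Gron} for the differential inequality
`|b'| ≤ |w|`, `|w'| ≤ |q||b|` on `[0,∞)`. -/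
theorem gronwall_estimate (q : ℝ) (hq : q ≠ 0) (b w b' w' : ℝ → ℝ)
    (hb : ∀ t ∈ Set.Ici (0 : ℝ), HasDerivWithinAt b (b' t) (Set.Ici 0) t)
    (hw : ∀ t ∈ Set.Ici (0 : ℝ), HasDerivWithinAt w (w' t) (Set.Ici 0) t)
    (hb' : ContinuousOn b' (Set.Ici 0))
    (hw' : ContinuousOn w' (Set.Ici 0))
    (h1 : ∀ t ∈ Set.Ici (0 : ℝ), |b' t| ≤ |w t|)
    (h2 : ∀ t ∈ Set.Ici (0 : ℝ), |w' t| ≤ |q| * |b t|)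
    (t : ℝ) (ht : 0 ≤ t) :
    |b t| ≤ Real.sqrt 2 * max (Real.sqrt |q| * |b 0|) (|w 0|) * (Real.sqrt |q|)⁻¹ *
        Real.exp (Real.sqrt |q| * t) ∧
    |w t| ≤ Real.sqrt 2 * max (Real.sqrt |q| * |b 0|) (|w 0|) *
        Real.exp (Real.sqrt |q| * t) := by
  have hq0 : 0 < |q| := abs_pos.mpr hq
  set K := Real.sqrt |q| with hKdef
  have hK0 : 0 < K := Real.sqrt_pos.mpr hq0
  have hK2 : K ^ 2 = |q| := Real.sq_sqrt hq0.le
  set E : ℝ → ℝ := fun s => |q| * b s ^ 2 + w s ^ 2 with hE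
  set F : ℝ → ℝ := fun s => E s * Real.exp (-(2 * K) * s) with hF
  have hbc : ContinuousOn b (Set.Ici 0) := fun s hs => (hb s hs).continuousWithinAt
  have hwc : ContinuousOn w (Set.Ici 0) := fun s hs => (hw s hs).continuousWithinAt
  have hEc : ContinuousOn E (Set.Ici 0) :=
    (continuousOn_const.mul (hbc.pow 2)).add (hwc.pow 2)
  have hFc : ContinuousOn F (Set.Ici 0) :=
    hEc.mul (Real.continuous_exp.comp (continuous_const.mul continuous_id)).continuousOn
  have hder : ∀ x ∈ interior (Set.Ici (0 : ℝ)), HasDerivAt F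
      ((|q| * (2 * b x * b' x) + 2 * w x * w' x - 2 * K * E x) * Real.exp (-(2 * K) * x)) x := by
    intro x hx
    rw [interior_Ici] at hx
    have hmem : Set.Ici (0 : ℝ) ∈ nhds x := Ici_mem_nhds hx
    have hbx : HasDerivAt b (b' x) x := (hb x (Set.mem_Ici.mpr (le_of_lt hx))).hasDerivAt hmem
    have hwx : HasDerivAt w (w' x) x := (hw x (Set.mem_Ici.mpr (le_of_lt hx))).hasDerivAt hmem
    have hEx : HasDerivAt E (|q| * (2 * b x * b' x) + 2 * w x * w' x) x := by
      have h1' : HasDerivAt (fun s => |q| * b s ^ 2) (|q| * (2 * b x * b' x)) x := by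
        have := (hbx.pow 2).const_mul |q|
        simpa [mul_comm, mul_assoc, mul_left_comm] using this
      have h2' : HasDerivAt (fun s => w s ^ 2) (2 * w x * w' x) x := by
        have := hwx.fun_pow 2
        simpa [mul_comm, mul_assoc, mul_left_comm] using this
      exact h1'.add h2'
    have hexp : HasDerivAt (fun s => Real.exp (-(2 * K) * s))
        (-(2 * K) * Real.exp (-(2 * K) * x)) x := by
      have h := ((hasDerivAt_id x).const_mul (-(2 * K))).exp
      simpa [mul_comm] using h
    have := hEx.fun_mul hexp
    exact this.congr_deriv (by ring)
  have hanti : AntitoneOn F (Set.Ici 0) := by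
    apply antitoneOn_of_deriv_nonpos (convex_Ici 0) hFc
    · intro x hx
      exact (hder x hx).differentiableAt.differentiableWithinAt
    · intro x hx
      rw [(hder x hx).deriv]
      rw [interior_Ici] at hx
      have hx0 : (0 : ℝ) ≤ x := le_of_lt hx
      -- E' ≤ 2 K E
      have key : |q| * (2 * b x * b' x) + 2 * w x * w' x ≤ 2 * K * E x := by
        have hb1 : b x * b' x ≤ |b x| * |w x| := by
          calc b x * b' x ≤ |b x * b' x| := le_abs_self _
          _ = |b x| * |b' x| := abs_mul _ _
          _ ≤ |b x| * |w x| := by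
            exact mul_le_mul_of_nonneg_left (h1 x hx0) (abs_nonneg _)
        have hw1 : w x * w' x ≤ |w x| * (|q| * |b x|) := by
          calc w x * w' x ≤ |w x * w' x| := le_abs_self _
          _ = |w x| * |w' x| := abs_mul _ _
          _ ≤ |w x| * (|q| * |b x|) := by
            exact mul_le_mul_of_nonneg_left (h2 x hx0) (abs_nonneg _)
        have hamgm : 2 * (K * |b x|) * |w x| ≤ (K * |b x|) ^ 2 + |w x| ^ 2 :=
          two_mul_le_add_sq _ _
        have hEx : E x = (K * |b x|) ^ 2 + |w x| ^ 2 := by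
          simp [hE, mul_pow, hK2, sq_abs]
        have hb2 : |b x| ^ 2 = b x ^ 2 := sq_abs _
        rw [hEx, ← hK2]
        rw [← hK2] at hw1
        nlinarith [mul_le_mul_of_nonneg_left hb1 (by positivity : (0:ℝ) ≤ 2 * K ^ 2),
          mul_le_mul_of_nonneg_left hw1 (by norm_num : (0:ℝ) ≤ 2),
          mul_le_mul_of_nonneg_left hamgm (by positivity : (0:ℝ) ≤ 2 * K)]
      have hexp0 : 0 < Real.exp (-(2 * K) * x) := Real.exp_pos _
      nlinarith [key, hexp0]
  -- F t ≤ F 0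
  have hFt : F t ≤ F 0 := hanti (Set.self_mem_Ici) (Set.mem_Ici.mpr ht) ht
  have hF0 : F 0 = E 0 := by simp [hF]
  have hEt : E t ≤ E 0 * Real.exp (2 * K * t) := by
    have h := hFt
    rw [hF0] at h
    have hexp0 : 0 < Real.exp (-(2 * K) * t) := Real.exp_pos _
    have : E t = F t * Real.exp (2 * K * t) := by
      simp only [hF]
      rw [mul_assoc, ← Real.exp_add]
      ring_nf
      simp
    rw [this]
    exact mul_le_mul_of_nonneg_right h (Real.exp_pos _).le
  set M := max (K * |b 0|) (|w 0|) with hM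
  have hM0 : 0 ≤ M := le_trans (mul_nonneg hK0.le (abs_nonneg _)) (le_max_left _ _)
  have hE0 : E 0 ≤ 2 * M ^ 2 := by
    have hb0 : K * |b 0| ≤ M := le_max_left _ _
    have hw0 : |w 0| ≤ M := le_max_right _ _
    have hb0' : (K * |b 0|) ^ 2 ≤ M ^ 2 :=
      pow_le_pow_left₀ (mul_nonneg hK0.le (abs_nonneg _)) hb0 2
    have hw0' : |w 0| ^ 2 ≤ M ^ 2 := pow_le_pow_left₀ (abs_nonneg _) hw0 2
    have hEx : E 0 = (K * |b 0|) ^ 2 + |w 0| ^ 2 := by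
      simp [hE, mul_pow, hK2, sq_abs]
    linarith
  have hEtM : E t ≤ (Real.sqrt 2 * M * Real.exp (K * t)) ^ 2 := by
    have h2' : (Real.sqrt 2) ^ 2 = 2 := Real.sq_sqrt (by norm_num)
    have hexpsq : (Real.exp (K * t)) ^ 2 = Real.exp (2 * K * t) := by
      rw [← Real.exp_nat_mul]
      ring_nf
    calc E t ≤ E 0 * Real.exp (2 * K * t) := hEt
    _ ≤ 2 * M ^ 2 * Real.exp (2 * K * t) :=
        mul_le_mul_of_nonneg_right hE0 (Real.exp_pos _).le
    _ = (Real.sqrt 2 * M * Real.exp (K * t)) ^ 2 := by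
        rw [mul_pow, mul_pow, h2', hexpsq]
  have hrhs0 : 0 ≤ Real.sqrt 2 * M * Real.exp (K * t) :=
    mul_nonneg (mul_nonneg (Real.sqrt_nonneg _) hM0) (Real.exp_pos _).le
  constructor
  · -- |q| * b t ^ 2 ≤ E t
    have hKb : (K * |b t|) ^ 2 ≤ (Real.sqrt 2 * M * Real.exp (K * t)) ^ 2 := by
      have : (K * |b t|) ^ 2 = |q| * b t ^ 2 := by
        rw [mul_pow, hK2, sq_abs]
      rw [this]
      have hw2 : 0 ≤ w t ^ 2 := sq_nonneg _
      calc |q| * b t ^ 2 ≤ E t := by simp [hE]; nlinarith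
      _ ≤ _ := hEtM
    have hKb' : K * |b t| ≤ Real.sqrt 2 * M * Real.exp (K * t) := by
      have h := Real.sqrt_le_sqrt hKb
      rwa [Real.sqrt_sq (mul_nonneg hK0.le (abs_nonneg _)), Real.sqrt_sq hrhs0] at h
    calc |b t| = K⁻¹ * (K * |b t|) := by field_simp
    _ ≤ K⁻¹ * (Real.sqrt 2 * M * Real.exp (K * t)) :=
        mul_le_mul_of_nonneg_left hKb' (inv_nonneg.mpr hK0.le)
    _ = Real.sqrt 2 * M * K⁻¹ * Real.exp (K * t) := by ring
  · have hw2 : |w t| ^ 2 ≤ (Real.sqrt 2 * M * Real.exp (K * t)) ^ 2 := by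
      rw [sq_abs]
      calc w t ^ 2 ≤ E t := by simp [hE]; nlinarith [sq_nonneg (b t), hq0.le]
      _ ≤ _ := hEtM
    have h := Real.sqrt_le_sqrt hw2
    rwa [Real.sqrt_sq (abs_nonneg _), Real.sqrt_sq hrhs0] at h
end

section
/- Fix δ ∈ (0, 1/2). There exists q₀ ∈ (0,1) such that for every real q with 0 < |q| ≤ q₀ the following holds. Let T > 0 satisfy T ≤ δ |q|^{−1/2} log(1/|q|). Let f : ℝ → ℝ be twice continuously differentiable with |f(x)| ≤ 1 and |f'(x)| ≤ 1 for all x. Let a, v, ε₁, ε₂ : [0,T] → ℝ be C¹ functions satisfying a'(t) = v(t) + ε₁(t) and v'(t) = q f(a(t)) + ε₂(t) on [0,T], with |ε₁(t)| ≤ |q|^{2−δ} and |ε₂(t)| ≤ |q|^{2−δ} for all t ∈ [0,T]. Let ā, v̄ : [0,T] → ℝ be C¹ functions satisfying the exact equations ā'(t) = v̄(t), v̄'(t) = q f(ā(t)) with the same initial data ā(0) = a(0), v̄(0) = v(0). Then for all t ∈ [0,T]: |a(t) − ā(t)| ≤ |q|^{1−2δ} log(1/|q|) and |v(t) − v̄(t)|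 ≤ |q|^{3/2−2δ} log(1/|q|). -/
open Set Real

/-- ODE comparison lemma (Lemma `L:ODEcompare`): the perturbed system
`a' = v + ε₁`, `v' = q f(a) + ε₂` stays close to the exact system
`abar' = vbar`, `vbar' = q f(abar)` for times `T ≤ δ|q|^{-1/2} log(1/|q|)`. -/
theorem ODE_comparison (δ : ℝ) (hδ0 : 0 < δ) (hδ1 : δ < 1 / 2) :
    ∃ q₀ : ℝ, 0 < q₀ ∧ q₀ < 1 ∧
      ∀ q : ℝ, 0 < |q| → |q| ≤ q₀ →
      ∀ T : ℝ, 0 < T → T ≤ δ * |q| ^ (-(1 : ℝ) / 2) * Real.log (1 / |q|) →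
      ∀ f : ℝ → ℝ, ContDiff ℝ 2 f → (∀ x, |f x| ≤ 1) → (∀ x, |deriv f x| ≤ 1) →
      ∀ a v ε₁ ε₂ : ℝ → ℝ,
      (∀ t ∈ Set.Icc (0 : ℝ) T, HasDerivWithinAt a (v t + ε₁ t) (Set.Icc 0 T) t) →
      (∀ t ∈ Set.Icc (0 : ℝ) T, HasDerivWithinAt v (q * f (a t) + ε₂ t) (Set.Icc 0 T) t) →
      ContDiffOn ℝ 1 ε₁ (Set.Icc 0 T) → ContDiffOn ℝ 1 ε₂ (Set.Icc 0 T) →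
      (∀ t ∈ Set.Icc (0 : ℝ) T, |ε₁ t| ≤ |q| ^ ((2 : ℝ) - δ)) →
      (∀ t ∈ Set.Icc (0 : ℝ) T, |ε₂ t| ≤ |q| ^ ((2 : ℝ) - δ)) →
      ∀ abar vbar : ℝ → ℝ,
      (∀ t ∈ Set.Icc (0 : ℝ) T, HasDerivWithinAt abar (vbar t) (Set.Icc 0 T) t) →
      (∀ t ∈ Set.Icc (0 : ℝ) T, HasDerivWithinAt vbar (q * f (abar t)) (Set.Icc 0 T) t) →
      abar 0 = a 0 → vbar 0 = v 0 →
      ∀ t ∈ Set.Icc (0 : ℝ) T,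
        |a t - abar t| ≤ |q| ^ ((1 : ℝ) - 2 * δ) * Real.log (1 / |q|) ∧
        |v t - vbar t| ≤ |q| ^ ((3 : ℝ) / 2 - 2 * δ) * Real.log (1 / |q|) := by
  refine ⟨Real.exp (-1), Real.exp_pos _, by
    simpa using Real.exp_lt_exp.2 (by norm_num : (-1 : ℝ) < 0), ?_⟩
  intro q hq0 hq1 T hT0 hTle f hf hfb hf'b a v ε₁ ε₂ ha' hv' _ _ hε₁ hε₂
    abar vbar habar' hvbar' ha0 hv0 t ht
  set Q := |q| with hQdef
  have hQ1 : Q < 1 := lt_of_le_of_lt hq1 (by simpa using Real.exp_lt_exp.2 (by norm_num : (-1:ℝ) < 0))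
  -- log (1/Q) ≥ 1
  have hL1 : (1 : ℝ) ≤ Real.log (1 / Q) := by
    rw [one_div, Real.log_inv]
    have : Real.log Q ≤ Real.log (Real.exp (-1)) := Real.log_le_log hq0 hq1
    rw [Real.log_exp] at this; linarith
  set L := Real.log (1 / Q) with hLdef
  have hL0 : 0 < L := lt_of_lt_of_le one_pos hL1
  set c := Q ^ ((1 : ℝ) / 2) with hcdef
  have hc0 : 0 < c := Real.rpow_pos_of_pos hq0 _
  have hc1 : c ≤ 1 := Real.rpow_le_one (abs_nonneg q) hQ1.le (by norm_num)
  have hcc : c * c = Q := by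
    rw [hcdef, ← Real.rpow_add hq0]; norm_num
  set E := Q ^ ((2 : ℝ) - δ) with hEdef
  have hE0 : 0 < E := Real.rpow_pos_of_pos hq0 _
  -- f is 1-Lipschitz
  have hfd : Differentiable ℝ f := hf.differentiable (by norm_num)
  have hlip : ∀ x y : ℝ, |f x - f y| ≤ |x - y| := by
    intro x y
    have := Convex.norm_image_sub_le_of_norm_deriv_le (s := Set.univ)
      (fun z _ => hfd z) (fun z _ => by rw [Real.norm_eq_abs]; exact hf'b z)
      convex_univ (Set.mem_univ y) (Set.mem_univ x)
    simpa using this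
  -- the combined error function
  set g : ℝ → ℝ × ℝ := fun s => (c * (a s - abar s), v s - vbar s) with hgdef
  set g' : ℝ → ℝ × ℝ := fun s =>
    (c * ((v s + ε₁ s) - vbar s), (q * f (a s) + ε₂ s) - q * f (abar s)) with hg'def
  have hgderiv : ∀ s ∈ Set.Ico (0 : ℝ) T, HasDerivWithinAt g (g' s) (Set.Ici s) s := by
    intro s hs
    have hmem : Set.Icc (0 : ℝ) T ∈ nhdsWithin s (Set.Ici s) := by
      refine Filter.mem_of_superset (Icc_mem_nhdsGE_of_mem ⟨le_refl s, hs.2⟩) ?_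
      exact Set.Icc_subset_Icc hs.1 le_rfl
    have hsI : s ∈ Set.Icc (0 : ℝ) T := ⟨hs.1, hs.2.le⟩
    exact ((((ha' s hsI).sub (habar' s hsI)).const_mul c).prodMk
      ((hv' s hsI).sub (hvbar' s hsI))).mono_of_mem_nhdsWithin hmem
  have hgcont : ContinuousOn g (Set.Icc 0 T) := by
    have hca : ContinuousOn a (Set.Icc 0 T) := fun s hs => (ha' s hs).continuousWithinAt
    have hcab : ContinuousOn abar (Set.Icc 0 T) := fun s hs => (habar' s hs).continuousWithinAt
    have hcv : ContinuousOn v (Set.Icc 0 T) := fun s hs => (hv' s hs).continuousWithinAt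
    have hcvb : ContinuousOn vbar (Set.Icc 0 T) := fun s hs => (hvbar' s hs).continuousWithinAt
    exact (continuousOn_const.mul (hca.sub hcab)).prodMk (hcv.sub hcvb)
  have hg0 : ‖g 0‖ ≤ 0 := by
    simp [hgdef, ha0, hv0]
  have hbound : ∀ s ∈ Set.Ico (0 : ℝ) T, ‖g' s‖ ≤ c * ‖g s‖ + E := by
    intro s hs
    have hsI : s ∈ Set.Icc (0 : ℝ) T := ⟨hs.1, hs.2.le⟩
    have h1 : ‖(g s).1‖ ≤ ‖g s‖ := norm_fst_le _
    have h2 : ‖(g s).2‖ ≤ ‖g s‖ := norm_snd_le _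
    simp only [hgdef, Real.norm_eq_abs] at h1 h2
    rw [hg'def, Prod.norm_def]
    simp only [Real.norm_eq_abs]
    refine max_le ?_ ?_
    · have : |c * ((v s + ε₁ s) - vbar s)| ≤ c * |v s - vbar s| + c * |ε₁ s| := by
        rw [abs_mul, abs_of_pos hc0]
        have : |(v s + ε₁ s) - vbar s| ≤ |v s - vbar s| + |ε₁ s| := by
          have : (v s + ε₁ s) - vbar s = (v s - vbar s) + ε₁ s := by ring
          rw [this]; exact abs_add_le _ _
        nlinarith [hc0.le]
      refine le_trans this ?_
      have h3 : c * |ε₁ s| ≤ E := by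
        calc c * |ε₁ s| ≤ 1 * E := by
              have := hε₁ s hsI
              have h4 : (0:ℝ) ≤ |ε₁ s| := abs_nonneg _
              nlinarith
          _ = E := one_mul E
      have h5 : c * |v s - vbar s| ≤ c * ‖g s‖ := by
        exact mul_le_mul_of_nonneg_left h2 hc0.le
      linarith
    · have hsplit : |(q * f (a s) + ε₂ s) - q * f (abar s)| ≤
          Q * |f (a s) - f (abar s)| + |ε₂ s| := by
        have heq : (q * f (a s) + ε₂ s) - q * f (abar s)
            = q * (f (a s) - f (abar s)) + ε₂ s := by ring
        rw [heq]
        refine le_trans (abs_add_le _ _) ?_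
        rw [abs_mul]
      refine le_trans hsplit ?_
      have h6 : Q * |f (a s) - f (abar s)| ≤ Q * |a s - abar s| :=
        mul_le_mul_of_nonneg_left (hlip _ _) (abs_nonneg q)
      have h7 : Q * |a s - abar s| = c * (c * |a s - abar s|) := by
        rw [← hcc]; ring
      have h8 : c * (c * |a s - abar s|) ≤ c * ‖g s‖ := by
        have : c * |a s - abar s| = |c * (a s - abar s)| := by
          rw [abs_mul, abs_of_pos hc0]
        rw [this]; exact mul_le_mul_of_nonneg_left h1 hc0.le
      have h9 := hε₂ s hsI
      linarith
  have hgron := norm_le_gronwallBound_of_norm_deriv_right_le hgcont hgderiv hg0 hbound t ht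
  -- compute the bound
  have hcT : c * T ≤ δ * L := by
    have : c * T ≤ c * (δ * Q ^ (-(1:ℝ)/2) * L) := mul_le_mul_of_nonneg_left hTle hc0.le
    refine le_trans this (le_of_eq ?_)
    have : c * Q ^ (-(1:ℝ)/2) = 1 := by
      rw [hcdef, ← Real.rpow_add hq0]; norm_num
    calc c * (δ * Q ^ (-(1:ℝ)/2) * L) = (c * Q ^ (-(1:ℝ)/2)) * (δ * L) := by ring
      _ = δ * L := by rw [this, one_mul]
  have hexp : Real.exp (c * t) ≤ Q ^ (-δ) := by
    have h1 : c * t ≤ c * T := mul_le_mul_of_nonneg_left ht.2 hc0.le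
    have h2 : Real.exp (c * t) ≤ Real.exp (δ * L) :=
      Real.exp_le_exp.2 (le_trans h1 hcT)
    refine le_trans h2 (le_of_eq ?_)
    rw [hLdef, one_div, Real.log_inv, Real.rpow_def_of_pos hq0]
    ring_nf
  have hgb : ‖g t‖ ≤ Q ^ ((3:ℝ)/2 - 2*δ) := by
    have h1 : gronwallBound 0 c E (t - 0) = E / c * (Real.exp (c * (t - 0)) - 1) := by
      rw [gronwallBound_of_K_ne_0 hc0.ne']; simp
    have h2 : E / c * (Real.exp (c * (t - 0)) - 1) ≤ E / c * Real.exp (c * t) := by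
      have : Real.exp (c * (t - 0)) - 1 ≤ Real.exp (c * t) := by
        simp only [sub_zero]; linarith [Real.exp_pos (c * t)]
      exact mul_le_mul_of_nonneg_left this (div_nonneg hE0.le hc0.le)
    have h3 : E / c * Real.exp (c * t) ≤ E / c * Q ^ (-δ) :=
      mul_le_mul_of_nonneg_left hexp (div_nonneg hE0.le hc0.le)
    have h4 : E / c * Q ^ (-δ) = Q ^ ((3:ℝ)/2 - 2*δ) := by
      rw [hEdef, hcdef, div_eq_mul_inv, ← Real.rpow_neg (abs_nonneg q),
        ← Real.rpow_add hq0, ← Real.rpow_add hq0]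
      congr 1; ring
    calc ‖g t‖ ≤ gronwallBound 0 c E (t - 0) := hgron
      _ = E / c * (Real.exp (c * (t - 0)) - 1) := h1
      _ ≤ E / c * Real.exp (c * t) := h2
      _ ≤ E / c * Q ^ (-δ) := h3
      _ = Q ^ ((3:ℝ)/2 - 2*δ) := h4
  have h1 : ‖(g t).1‖ ≤ ‖g t‖ := norm_fst_le _
  have h2 : ‖(g t).2‖ ≤ ‖g t‖ := norm_snd_le _
  simp only [hgdef, Real.norm_eq_abs] at h1 h2
  constructor
  · -- |a t - abar t| ≤ Q^{1-2δ} * L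
    have hca : c * |a t - abar t| ≤ Q ^ ((3:ℝ)/2 - 2*δ) := by
      have : c * |a t - abar t| = |c * (a t - abar t)| := by
        rw [abs_mul, abs_of_pos hc0]
      rw [this]; exact le_trans h1 hgb
    have hstep : |a t - abar t| ≤ Q ^ ((1:ℝ) - 2*δ) := by
      rw [← mul_le_mul_iff_right₀ hc0]
      refine le_trans hca (le_of_eq ?_)
      rw [hcdef, ← Real.rpow_add hq0]
      congr 1; ring
    refine le_trans hstep ?_
    exact le_mul_of_one_le_right (Real.rpow_nonneg (abs_nonneg q) _) hL1
  · refine le_trans (le_trans h2 hgb) ?_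
    exact le_mul_of_one_le_right (Real.rpow_nonneg (abs_nonneg q) _) hL1
end

section
/- Let q ∈ ℝ, g = (a, v, γ, μ) ∈ ℝ³ × ℝ₊, and set u_g(x) = e^{iγ} e^{iv(x−a)} μ sech(μ(x−a)). Then (1/4)∫_ℝ |u_g'(x)|² dx − (1/4)∫_ℝ |u_g(x)|⁴ dx + (q/2)|u_g(0)|² = μv²/2 − μ³/6 + (q/2) μ² sech²(μa). In particular the Gross–Pitaevskii Hamiltonian H_q(u) = (1/4)∫(|∂ₓu|² − |u|⁴) + (q/2)|u(0)|² restricted to the manifold of solitons equals μv²/2 − μ³/6 + (q/2)μ² sech²(μa). -/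
open MeasureTheory Filter Set

/- Auxiliary lemmas about `tanh = sinh / cosh` and `sech = 1 / cosh`. -/

private lemma tanh_rep_top (x : ℝ) : Real.sinh x / Real.cosh x
    = (1 - Real.exp (-(2 * x))) / (1 + Real.exp (-(2 * x))) := by
  have h1 : (0:ℝ) < Real.exp x := Real.exp_pos x
  have h2 : Real.exp (-(2*x)) = (Real.exp x)⁻¹ * (Real.exp x)⁻¹ := by
    rw [← Real.exp_neg, ← Real.exp_add]; ring_nf
  rw [Real.sinh_eq, Real.cosh_eq, Real.exp_neg, h2]
  have hb : Real.exp x + (Real.exp x)⁻¹ ≠ 0 := by positivity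
  have hc : 1 + (Real.exp x)⁻¹ * (Real.exp x)⁻¹ ≠ 0 := by positivity
  field_simp

private lemma tanh_rep_bot (x : ℝ) : Real.sinh x / Real.cosh x
    = (Real.exp (2 * x) - 1) / (Real.exp (2 * x) + 1) := by
  have h1 : (0:ℝ) < Real.exp x := Real.exp_pos x
  have h2 : Real.exp (2*x) = Real.exp x * Real.exp x := by
    rw [← Real.exp_add]; ring_nf
  rw [Real.sinh_eq, Real.cosh_eq, Real.exp_neg, h2]
  have hb : Real.exp x + (Real.exp x)⁻¹ ≠ 0 := by positivity
  have hc : Real.exp x * Real.exp x + 1 ≠ 0 := by positivity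
  field_simp

private lemma tendsto_tanh_atTop :
    Tendsto (fun x : ℝ => Real.sinh x / Real.cosh x) atTop (nhds 1) := by
  have hexp : Tendsto (fun x : ℝ => Real.exp (-(2 * x))) atTop (nhds 0) := by
    have h2 : Tendsto (fun x : ℝ => (2:ℝ) * x) atTop atTop :=
      Tendsto.const_mul_atTop two_pos tendsto_id
    have h3 : Tendsto (fun x : ℝ => -(2 * x)) atTop atBot := tendsto_neg_atTop_atBot.comp h2
    exact Real.tendsto_exp_atBot.comp h3
  have h : Tendsto (fun x : ℝ => (1 - Real.exp (-(2 * x))) / (1 + Real.exp (-(2 * x))))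
      atTop (nhds ((1 - 0) / (1 + 0))) :=
    Tendsto.div (tendsto_const_nhds.sub hexp) (tendsto_const_nhds.add hexp) (by norm_num)
  simp only [sub_zero, add_zero, div_one] at h
  exact h.congr fun x => (tanh_rep_top x).symm

private lemma tendsto_tanh_atBot :
    Tendsto (fun x : ℝ => Real.sinh x / Real.cosh x) atBot (nhds (-1)) := by
  have hexp : Tendsto (fun x : ℝ => Real.exp (2 * x)) atBot (nhds 0) := by
    have h2 : Tendsto (fun x : ℝ => (2:ℝ) * x) atBot atBot :=
      Tendsto.const_mul_atBot two_pos tendsto_id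
    exact Real.tendsto_exp_atBot.comp h2
  have h : Tendsto (fun x : ℝ => (Real.exp (2 * x) - 1) / (Real.exp (2 * x) + 1))
      atBot (nhds ((0 - 1) / (0 + 1))) :=
    Tendsto.div (hexp.sub tendsto_const_nhds) (hexp.add tendsto_const_nhds) (by norm_num)
  norm_num at h
  exact h.congr fun x => (tanh_rep_bot x).symm

private lemma hasDerivAt_tanh (x : ℝ) :
    HasDerivAt (fun y : ℝ => Real.sinh y / Real.cosh y) ((1 / Real.cosh x) ^ 2) x := by
  have h := (Real.hasDerivAt_sinh x).div (Real.hasDerivAt_cosh x) (Real.cosh_pos x).ne'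
  refine h.congr_deriv ?_
  have h1 := Real.cosh_sq_sub_sinh_sq x
  have h2 := (Real.cosh_pos x).ne'
  field_simp
  nlinarith [h1]

private lemma integrable_of_even {f : ℝ → ℝ} (he : ∀ x, f (-x) = f x)
    (hf : IntegrableOn f (Ioi 0)) : Integrable f := by
  have h1 : Integrable ((Ioi (0:ℝ)).indicator f) :=
    (integrable_indicator_iff measurableSet_Ioi).2 hf
  have h2 := h1.comp_neg
  have h3 : (fun x => (Ioi (0:ℝ)).indicator f (-x)) = (Iio (0:ℝ)).indicator f := by
    funext x
    simp only [Set.indicator_apply, Set.mem_Ioi, Set.mem_Iio, neg_pos]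
    split_ifs with h
    · exact he x
    · rfl
  rw [h3] at h2
  have h4 : IntegrableOn f (Iio 0) := (integrable_indicator_iff measurableSet_Iio).1 h2
  rw [← integrableOn_univ, ← Set.Iio_union_Ici (a := (0:ℝ))]
  exact h4.union ((integrableOn_Ici_iff_integrableOn_Ioi (by simp)).2 hf)

private lemma integrable_sech_sq : Integrable (fun x : ℝ => (1 / Real.cosh x) ^ 2) := by
  apply integrable_of_even (fun x => by rw [Real.cosh_neg])
  exact integrableOn_Ioi_deriv_of_nonneg' (fun x _ => hasDerivAt_tanh x)
    (fun x _ => sq_nonneg _) tendsto_tanh_atTop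

private lemma integral_sech_sq : ∫ x : ℝ, (1 / Real.cosh x) ^ 2 = 2 := by
  have := integral_of_hasDerivAt_of_tendsto (fun x => hasDerivAt_tanh x)
    integrable_sech_sq tendsto_tanh_atBot tendsto_tanh_atTop
  rw [this]; norm_num

private lemma integrable_sech_four : Integrable (fun x : ℝ => (1 / Real.cosh x) ^ 4) := by
  apply integrable_sech_sq.mono'
  · exact ((continuous_const.div Real.continuous_cosh
      (fun x => (Real.cosh_pos x).ne')).pow 4).aestronglyMeasurable
  · refine Filter.Eventually.of_forall fun x => ?_
    have h0 : (0:ℝ) ≤ 1 / Real.cosh x := by positivity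
    have h1 : 1 / Real.cosh x ≤ 1 := by
      rw [div_le_one (Real.cosh_pos x)]; exact Real.one_le_cosh x
    rw [Real.norm_eq_abs, abs_of_nonneg (by positivity)]
    exact pow_le_pow_of_le_one h0 h1 (by norm_num)

private lemma hasDerivAt_tanh_cube (x : ℝ) :
    HasDerivAt (fun y : ℝ => Real.sinh y / Real.cosh y -
      (Real.sinh y / Real.cosh y) ^ 3 / 3) ((1 / Real.cosh x) ^ 4) x := by
  have hT := hasDerivAt_tanh x
  have h := hT.sub ((hT.pow 3).div_const 3)
  refine h.congr_deriv ?_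
  have h1 := Real.cosh_sq_sub_sinh_sq x
  have h2 := (Real.cosh_pos x).ne'
  field_simp
  norm_num
  field_simp
  linear_combination h1

private lemma integral_sech_four : ∫ x : ℝ, (1 / Real.cosh x) ^ 4 = 4 / 3 := by
  have hbot : Tendsto (fun y : ℝ => Real.sinh y / Real.cosh y -
      (Real.sinh y / Real.cosh y) ^ 3 / 3) atBot (nhds (-1 - (-1) ^ 3 / 3)) :=
    tendsto_tanh_atBot.sub ((tendsto_tanh_atBot.pow 3).div_const 3)
  have htop : Tendsto (fun y : ℝ => Real.sinh y / Real.cosh y -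
      (Real.sinh y / Real.cosh y) ^ 3 / 3) atTop (nhds (1 - 1 ^ 3 / 3)) :=
    tendsto_tanh_atTop.sub ((tendsto_tanh_atTop.pow 3).div_const 3)
  have := integral_of_hasDerivAt_of_tendsto (fun x => hasDerivAt_tanh_cube x)
    integrable_sech_four hbot htop
  rw [this]; norm_num

open MeasureTheory

/-- The soliton `u_g(x) = e^{iγ}e^{iv(x-a)} μ sech(μ(x-a))` associated to
`g = (a, v, γ, μ) ∈ ℝ³ × ℝ₊`. -/
noncomputable def soliton (a v γ μ : ℝ) : ℝ → ℂ := fun x =>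
  Complex.exp (Complex.I * γ) * Complex.exp (Complex.I * v * (x - a)) * μ *
    (↑(1 / Real.cosh (μ * (x - a))) : ℂ)

private lemma soliton_hasDerivAt (a v γ μ : ℝ) (x : ℝ) :
    HasDerivAt (soliton a v γ μ)
      (Complex.exp (Complex.I * γ) * μ *
        (Complex.exp (Complex.I * v * (x - a)) * (Complex.I * v) *
            ((1 / Real.cosh (μ * (x - a)) : ℝ) : ℂ)
          + Complex.exp (Complex.I * v * (x - a)) *
            ((-(μ * Real.sinh (μ * (x - a)) / Real.cosh (μ * (x - a)) ^ 2) : ℝ) : ℂ))) x := by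
  have hx : HasDerivAt (fun y : ℝ => ((y : ℂ) - a)) 1 x := by
    simpa using Complex.ofRealCLM.hasDerivAt.sub_const (a : ℂ)
  have hB : HasDerivAt (fun y : ℝ => Complex.exp (Complex.I * v * ((y : ℂ) - a)))
      (Complex.exp (Complex.I * v * ((x : ℂ) - a)) * (Complex.I * v)) x := by
    have := (hx.const_mul (Complex.I * v)).cexp
    simpa using this
  have hμx : HasDerivAt (fun y : ℝ => μ * (y - a)) μ x := by
    simpa using ((hasDerivAt_id x).sub_const a).const_mul μ
  have hSr : HasDerivAt (fun y : ℝ => 1 / Real.cosh (μ * (y - a)))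
      (-(μ * Real.sinh (μ * (x - a)) / Real.cosh (μ * (x - a)) ^ 2)) x := by
    have h1 : HasDerivAt (fun y : ℝ => Real.cosh (μ * (y - a)))
        (Real.sinh (μ * (x - a)) * μ) x := (Real.hasDerivAt_cosh _).comp x hμx
    have h2 := h1.inv (Real.cosh_pos _).ne'
    simp only [one_div]
    refine h2.congr_deriv ?_
    field_simp
  have hS := hSr.ofReal_comp
  have hprod := hB.mul hS
  have hmain := hprod.const_mul (Complex.exp (Complex.I * γ) * μ)
  have hfun : soliton a v γ μ = fun y : ℝ =>
      (Complex.exp (Complex.I * γ) * μ) *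
        (Complex.exp (Complex.I * v * ((y : ℂ) - a)) *
          ((1 / Real.cosh (μ * (y - a)) : ℝ) : ℂ)) := by
    funext y; simp only [soliton]; ring
  rw [hfun]
  convert hmain using 1 <;> rfl

private lemma sechsq_identity (μ v c sh : ℝ) (hc : 0 < c) (hsh : sh ^ 2 = c ^ 2 - 1) :
    μ ^ 2 * ((-(μ * sh / c ^ 2)) ^ 2 + v ^ 2 * (1 / c) ^ 2)
      = μ ^ 2 * v ^ 2 * (1 / c) ^ 2 + μ ^ 4 * ((1 / c) ^ 2 - (1 / c) ^ 4) := by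
  have h2 := hc.ne'
  field_simp
  linear_combination μ ^ 4 * hsh

private lemma norm_deriv_soliton_sq (a v γ μ : ℝ) (hμ : 0 < μ) (x : ℝ) :
    ‖deriv (soliton a v γ μ) x‖ ^ 2
      = μ ^ 2 * v ^ 2 * (1 / Real.cosh (μ * (x - a))) ^ 2
        + μ ^ 4 * ((1 / Real.cosh (μ * (x - a))) ^ 2 - (1 / Real.cosh (μ * (x - a))) ^ 4) := by
  rw [(soliton_hasDerivAt a v γ μ x).deriv]
  set s : ℝ := 1 / Real.cosh (μ * (x - a)) with hs
  set w : ℝ := -(μ * Real.sinh (μ * (x - a)) / Real.cosh (μ * (x - a)) ^ 2) with hw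
  have hZ : Complex.exp (Complex.I * ↑v * (↑x - ↑a)) * (Complex.I * ↑v) * (s : ℂ)
        + Complex.exp (Complex.I * ↑v * (↑x - ↑a)) * (w : ℂ)
      = Complex.exp (Complex.I * ↑v * (↑x - ↑a)) * (Complex.I * v * s + w) := by ring
  rw [hZ, norm_mul, norm_mul, norm_mul]
  have hre1 : (Complex.I * (γ:ℂ)).re = 0 := by simp
  have hre2 : (Complex.I * (v:ℂ) * ((x:ℂ) - (a:ℂ))).re = 0 := by
    simp [Complex.mul_re, Complex.mul_im]
  have h1 : ‖Complex.exp (Complex.I * (γ:ℂ))‖ = 1 := by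
    rw [Complex.norm_exp, hre1, Real.exp_zero]
  have h2 : ‖Complex.exp (Complex.I * ↑v * (↑x - ↑a))‖ = 1 := by
    rw [Complex.norm_exp, hre2, Real.exp_zero]
  have h3 : ‖(μ : ℂ)‖ = μ := by
    rw [Complex.norm_real, Real.norm_eq_abs, abs_of_pos hμ]
  have h4 : ‖Complex.I * ↑v * ↑s + ↑w‖ ^ 2 = v ^ 2 * s ^ 2 + w ^ 2 := by
    rw [Complex.sq_norm, Complex.normSq_apply]
    simp only [Complex.add_re, Complex.add_im, Complex.mul_re, Complex.mul_im, Complex.I_re,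
      Complex.I_im, Complex.ofReal_re, Complex.ofReal_im]
    ring
  rw [h1, h2, h3, one_mul, one_mul, mul_pow, h4]
  have hc := Real.cosh_pos (μ * (x - a))
  have hsinh := Real.sinh_sq (μ * (x - a))
  rw [hs, hw]
  have := sechsq_identity μ v (Real.cosh (μ * (x - a))) (Real.sinh (μ * (x - a))) hc hsinh
  linear_combination this

private lemma norm_soliton (a v γ μ : ℝ) (hμ : 0 < μ) (x : ℝ) :
    ‖soliton a v γ μ x‖ = μ * (1 / Real.cosh (μ * (x - a))) := by
  have hre1 : (Complex.I * (γ:ℂ)).re = 0 := by simp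
  have hre2 : (Complex.I * (v:ℂ) * ((x:ℂ) - (a:ℂ))).re = 0 := by
    simp [Complex.mul_re, Complex.mul_im]
  simp only [soliton, norm_mul]
  rw [Complex.norm_exp, hre1, Real.exp_zero]
  rw [Complex.norm_exp, hre2, Real.exp_zero]
  rw [Complex.norm_real, Complex.norm_real, Real.norm_eq_abs, Real.norm_eq_abs,
    abs_of_pos hμ, abs_of_pos (by positivity : (0:ℝ) < 1 / Real.cosh (μ * (x - a)))]
  ring

/-- The Gross–Pitaevskii Hamiltonian restricted to the manifold of solitons
(equation \eqref{eq:GPHM}):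
`H_q(u_g) = μv²/2 - μ³/6 + (q/2) μ² sech²(μa)`. -/
theorem GP_hamiltonian_on_solitons (q a v γ : ℝ) (μ : ℝ) (hμ : 0 < μ) :
    (1 / 4) * (∫ x : ℝ, ‖deriv (soliton a v γ μ) x‖ ^ 2)
      - (1 / 4) * (∫ x : ℝ, ‖soliton a v γ μ x‖ ^ 4)
      + (q / 2) * ‖soliton a v γ μ 0‖ ^ 2
    = μ * v ^ 2 / 2 - μ ^ 3 / 6 + (q / 2) * μ ^ 2 * (1 / Real.cosh (μ * a)) ^ 2 := by
  set F : ℝ → ℝ := fun y => μ ^ 2 * v ^ 2 * (1 / Real.cosh y) ^ 2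
      + μ ^ 4 * ((1 / Real.cosh y) ^ 2 - (1 / Real.cosh y) ^ 4) with hF
  have hi2 : Integrable (fun y : ℝ => (1 / Real.cosh y) ^ 2 - (1 / Real.cosh y) ^ 4) := by
    exact integrable_sech_sq.sub integrable_sech_four
  have hFval : ∫ y : ℝ, F y = μ ^ 2 * v ^ 2 * 2 + μ ^ 4 * (2 - 4 / 3) := by
    rw [hF]
    rw [integral_add (integrable_sech_sq.const_mul _) (hi2.const_mul _)]
    rw [integral_const_mul, integral_const_mul,
      integral_sub integrable_sech_sq integrable_sech_four, integral_sech_sq, integral_sech_four]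
  -- change of variables for the whole line
  have key : ∀ G : ℝ → ℝ, ∫ x : ℝ, G (μ * (x - a)) = μ⁻¹ * ∫ y : ℝ, G y := by
    intro G
    have h1 : (fun x : ℝ => G (μ * (x - a))) = fun x : ℝ => (fun y => G (y - μ * a)) (μ • x) := by
      funext x
      simp only [smul_eq_mul]
      ring_nf
    rw [h1, MeasureTheory.Measure.integral_comp_smul volume (fun y => G (y - μ * a)) μ]
    rw [integral_sub_right_eq_self (fun y => G y) (μ * a)]
    rw [smul_eq_mul]
    norm_num [abs_of_pos (inv_pos.2 hμ)]
  have hderiv : ∫ x : ℝ, ‖deriv (soliton a v γ μ) x‖ ^ 2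
      = μ⁻¹ * (μ ^ 2 * v ^ 2 * 2 + μ ^ 4 * (2 - 4 / 3)) := by
    rw [show (fun x : ℝ => ‖deriv (soliton a v γ μ) x‖ ^ 2) = fun x => F (μ * (x - a)) from
      funext fun x => by rw [norm_deriv_soliton_sq a v γ μ hμ x]]
    rw [key F, hFval]
  have hquart : ∫ x : ℝ, ‖soliton a v γ μ x‖ ^ 4 = μ⁻¹ * (μ ^ 4 * (4 / 3)) := by
    have h1 : (fun x : ℝ => ‖soliton a v γ μ x‖ ^ 4)
        = fun x => (fun y => μ ^ 4 * (1 / Real.cosh y) ^ 4) (μ * (x - a)) := by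
      funext x; rw [norm_soliton a v γ μ hμ x]; ring
    rw [h1, key (fun y => μ ^ 4 * (1 / Real.cosh y) ^ 4), integral_const_mul, integral_sech_four]
  have hzero : ‖soliton a v γ μ 0‖ ^ 2 = μ ^ 2 * (1 / Real.cosh (μ * a)) ^ 2 := by
    rw [norm_soliton a v γ μ hμ 0]
    rw [show μ * ((0:ℝ) - a) = -(μ * a) by ring, Real.cosh_neg]
    ring
  rw [hderiv, hquart, hzero]
  field_simp
  ring
end

section
/- Define the energy functional E(u) = (1/4)∫_ℝ (|u'(x)|² − |u(x)|⁴ + |u(x)|²) dx and let η(x) = sech x. Then for every H¹-admissible w : ℝ → ℂ, all the integrals defining E(η + w) are finite, the terms linear in w cancel (because η solves −(1/2)η'' − η³ + (1/2)η = 0), and |E(η + w) − E(η)| ≤ 8‖w‖²_{H¹} + 4‖w‖³_{H¹} + ‖w‖⁴_{H¹}. -/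
open MeasureTheory

/-- `η x = sech x`. -/
noncomputable def η (x : ℝ) : ℝ := 1 / Real.cosh x

/-- `w : ℝ → ℂ` is H¹-admissible: continuously differentiable with `w` and `w'` in `L²`. -/
def H1adm (w : ℝ → ℂ) : Prop :=
  ContDiff ℝ 1 w ∧ Integrable (fun x : ℝ => ‖w x‖ ^ 2) ∧
    Integrable (fun x : ℝ => ‖deriv w x‖ ^ 2)

/-- The `H¹` norm. -/
noncomputable def H1norm (w : ℝ → ℂ) : ℝ :=
  Real.sqrt (∫ x : ℝ, (‖w x‖ ^ 2 + ‖deriv w x‖ ^ 2))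

/-- The energy functional `E(u) = (1/4)∫ (|u'|² - |u|⁴ + |u|²)`. -/
noncomputable def energyE (u : ℝ → ℂ) : ℝ :=
  (1 / 4) * ∫ x : ℝ, (‖deriv u x‖ ^ 2 - ‖u x‖ ^ 4 + ‖u x‖ ^ 2)

namespace LyapAux

open Filter Set Topology

noncomputable def ηd (x : ℝ) : ℝ := -Real.sinh x / Real.cosh x ^ 2

lemma η_pos (x : ℝ) : 0 < η x := div_pos one_pos (Real.cosh_pos x)

lemma η_nonneg (x : ℝ) : 0 ≤ η x := (η_pos x).le

lemma η_le_one (x : ℝ) : η x ≤ 1 := by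
  rw [η, div_le_one (Real.cosh_pos x)]; exact Real.one_le_cosh x

lemma continuous_η : Continuous η :=
  continuous_const.div Real.continuous_cosh (fun x => (Real.cosh_pos x).ne')

lemma continuous_ηd : Continuous ηd :=
  Real.continuous_sinh.neg.div (Real.continuous_cosh.pow 2)
    (fun x => (pow_pos (Real.cosh_pos x) 2).ne')

lemma hasDerivAt_η (x : ℝ) : HasDerivAt η (ηd x) x := by
  have h := (Real.hasDerivAt_cosh x).inv (Real.cosh_pos x).ne'
  unfold η ηd
  rw [show (fun x => 1 / Real.cosh x) = fun x => (Real.cosh x)⁻¹ from funext fun x => one_div _]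
  exact h

lemma deriv_η : deriv η = ηd := funext fun x => (hasDerivAt_η x).deriv

lemma abs_sinh_le_cosh (x : ℝ) : |Real.sinh x| ≤ Real.cosh x := by
  have h := Real.cosh_sq x
  have h2 := Real.cosh_pos x
  rw [abs_le]; constructor <;> nlinarith

lemma abs_ηd_le (x : ℝ) : |ηd x| ≤ η x := by
  have hc := Real.cosh_pos x
  rw [ηd, η, abs_div, abs_neg, abs_of_pos (pow_pos hc 2),
    div_le_div_iff₀ (pow_pos hc 2) hc]
  have := abs_sinh_le_cosh x
  nlinarith [abs_nonneg (Real.sinh x)]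

lemma hasDerivAt_ηd (x : ℝ) : HasDerivAt ηd (η x - 2 * η x ^ 3) x := by
  have hc := Real.cosh_pos x
  have h1 : HasDerivAt (fun y => Real.cosh y ^ 2) (2 * Real.cosh x * Real.sinh x) x := by
    have := (Real.hasDerivAt_cosh x).fun_pow 2
    exact this.congr_deriv (by norm_num)
  have h2 := ((Real.hasDerivAt_sinh x).neg.div h1 (pow_pos hc 2).ne')
  refine h2.congr_deriv (Eq.symm ?_)
  have hs := Real.sinh_sq x
  rw [η]
  field_simp
  simp only [Pi.neg_apply]
  linear_combination (-2) * hs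

lemma integrable_η : Integrable η := by
  have hexp : ∀ x : ℝ, Real.exp x * Real.exp (-x) = 1 := by
    intro x; rw [← Real.exp_add]; simp
  rw [← integrableOn_univ, ← Set.Iic_union_Ioi (a := (0:ℝ))]
  apply IntegrableOn.union
  · refine Integrable.mono' ((integrableOn_exp_Iic 0).const_mul 2)
      continuous_η.aestronglyMeasurable.restrict ?_
    filter_upwards with x
    try simp only [Pi.add_apply]
    rw [Real.norm_eq_abs, abs_of_pos (η_pos x), η, div_le_iff₀ (Real.cosh_pos x),
      Real.cosh_eq]
    nlinarith [hexp x, sq_nonneg (Real.exp x)]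
  · refine Integrable.mono' ((exp_neg_integrableOn_Ioi 0 one_pos).const_mul 2)
      continuous_η.aestronglyMeasurable.restrict ?_
    filter_upwards with x
    try simp only [Pi.add_apply]
    rw [Real.norm_eq_abs, abs_of_pos (η_pos x), η, neg_one_mul,
      div_le_iff₀ (Real.cosh_pos x), Real.cosh_eq]
    nlinarith [hexp x, sq_nonneg (Real.exp (-x))]

lemma integrable_η_pow (k : ℕ) (hk : k ≠ 0) : Integrable (fun x => η x ^ k) := by
  refine integrable_η.mono' ((continuous_η.pow k).aestronglyMeasurable) ?_
  filter_upwards with x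
  rw [Real.norm_eq_abs, abs_of_nonneg (pow_nonneg (η_nonneg x) k)]
  calc η x ^ k ≤ η x ^ 1 :=
        pow_le_pow_of_le_one (η_nonneg x) (η_le_one x) (Nat.one_le_iff_ne_zero.mpr hk)
    _ = η x := pow_one _

lemma norm_sq_eq (z : ℂ) : ‖z‖^2 = z.re^2 + z.im^2 := by
  rw [Complex.sq_norm, Complex.normSq_apply]; ring

lemma norm_pow4_eq (z : ℂ) : ‖z‖^4 = (z.re^2 + z.im^2)^2 := by
  rw [show (4:ℕ) = 2*2 from rfl, pow_mul, norm_sq_eq]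

lemma sup_sq_le (w : ℝ → ℂ) (hw1 : ContDiff ℝ 1 w)
    (hw2 : Integrable (fun x : ℝ => ‖w x‖ ^ 2))
    (hw3 : Integrable (fun x : ℝ => ‖deriv w x‖ ^ 2)) (x : ℝ) :
    ‖w x‖ ^ 2 ≤ ∫ y : ℝ, (‖w y‖ ^ 2 + ‖deriv w y‖ ^ 2) := by
  have hcw : Continuous w := hw1.continuous
  have hcw' : Continuous (deriv w) := hw1.continuous_deriv le_rfl
  have hd : ∀ y, HasDerivAt w (deriv w y) y :=
    fun y => (hw1.differentiable one_ne_zero y).hasDerivAt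
  set g : ℝ → ℝ := fun y => ‖w y‖ ^ 2 with hgdef
  set g' : ℝ → ℝ :=
    fun y => 2 * (w y).re * (deriv w y).re + 2 * (w y).im * (deriv w y).im with hg'def
  have hg : ∀ y, HasDerivAt g (g' y) y := by
    intro y
    have hr : HasDerivAt (fun t => (w t).re) ((deriv w y).re) y :=
      Complex.reCLM.hasFDerivAt.comp_hasDerivAt y (hd y)
    have hi : HasDerivAt (fun t => (w t).im) ((deriv w y).im) y :=
      Complex.imCLM.hasFDerivAt.comp_hasDerivAt y (hd y)
    have h2 := (hr.pow 2).add (hi.pow 2)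
    have hfun : g = fun t => (w t).re ^ 2 + (w t).im ^ 2 := by
      funext t; exact norm_sq_eq (w t)
    rw [hfun]
    refine h2.congr_deriv (Eq.symm ?_)
    simp only [hg'def]
    ring
  have hbound : ∀ y, |g' y| ≤ ‖w y‖ ^ 2 + ‖deriv w y‖ ^ 2 := by
    intro y
    simp only [hg'def]
    rw [norm_sq_eq, norm_sq_eq, abs_le]
    constructor <;>
      nlinarith [sq_nonneg ((w y).re - (deriv w y).re), sq_nonneg ((w y).im - (deriv w y).im),
        sq_nonneg ((w y).re + (deriv w y).re), sq_nonneg ((w y).im + (deriv w y).im)]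
  have hg'cont : Continuous g' := by
    apply Continuous.add <;> continuity
  have hg'int : Integrable g' := by
    refine (hw2.add hw3).mono' hg'cont.aestronglyMeasurable ?_
    filter_upwards with y
    simpa [Real.norm_eq_abs] using hbound y
  have h0 : Tendsto g atTop (𝓝 0) :=
    tendsto_zero_of_hasDerivAt_of_integrableOn_Ioi (a := x) (fun y _ => hg y)
      hg'int.integrableOn hw2.integrableOn
  have key : ∫ y in Ioi x, g' y = 0 - g x :=
    integral_Ioi_of_hasDerivAt_of_tendsto' (fun y _ => hg y) hg'int.integrableOn h0
  have h1 : g x = - ∫ y in Ioi x, g' y := by rw [key]; ring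
  have h2 : - ∫ y in Ioi x, g' y ≤ ∫ y in Ioi x, |g' y| := by
    refine (neg_le_abs _).trans ?_
    rw [← Real.norm_eq_abs]
    refine (norm_integral_le_integral_norm _).trans ?_
    simp [Real.norm_eq_abs]
  have h3 : ∫ y in Ioi x, |g' y| ≤ ∫ y in Ioi x, (‖w y‖ ^ 2 + ‖deriv w y‖ ^ 2) := by
    refine integral_mono_ae hg'int.abs.integrableOn (hw2.add hw3).integrableOn ?_
    filter_upwards with y using hbound y
  have h4 : ∫ y in Ioi x, (‖w y‖ ^ 2 + ‖deriv w y‖ ^ 2)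
      ≤ ∫ y : ℝ, (‖w y‖ ^ 2 + ‖deriv w y‖ ^ 2) := by
    refine setIntegral_le_integral (hw2.add hw3) ?_
    filter_upwards with y; positivity
  calc g x = - ∫ y in Ioi x, g' y := h1
    _ ≤ _ := h2.trans (h3.trans h4)

end LyapAux

open LyapAux Filter Set Topology

set_option maxHeartbeats 1000000 in
/-- Estimate on the Lyapunov function `E(η+w) - E(η)` (estimate \eqref{E:line5}):
all integrals defining `E(η+w)` are finite, the terms linear in `w` cancel
(since `-(1/2)η'' - η³ + (1/2)η = 0`), and
`|E(η+w) - E(η)| ≤ 8‖w‖²_{H¹} + 4‖w‖³_{H¹} + ‖w‖⁴_{H¹}`. -/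
theorem lyapunov_expansion_estimate (w : ℝ → ℂ) (hw : H1adm w) :
    Integrable (fun x : ℝ => ‖deriv (fun y : ℝ => (η y : ℂ) + w y) x‖ ^ 2) ∧
    Integrable (fun x : ℝ => ‖(η x : ℂ) + w x‖ ^ 4) ∧
    Integrable (fun x : ℝ => ‖(η x : ℂ) + w x‖ ^ 2) ∧
    (∫ x : ℝ, (deriv η x * (deriv w x).re - 2 * η x ^ 3 * (w x).re
        + η x * (w x).re)) = 0 ∧
    |energyE (fun x : ℝ => (η x : ℂ) + w x) - energyE (fun x : ℝ => (η x : ℂ))|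
      ≤ 8 * H1norm w ^ 2 + 4 * H1norm w ^ 3 + H1norm w ^ 4 := by
  obtain ⟨hw1, hw2, hw3⟩ := hw
  have hcw : Continuous w := hw1.continuous
  have hcw' : Continuous (deriv w) := hw1.continuous_deriv le_rfl
  have hd : ∀ x, HasDerivAt w (deriv w x) x :=
    fun x => (hw1.differentiable one_ne_zero x).hasDerivAt
  set N := H1norm w with hNdef
  have hN0 : 0 ≤ N := Real.sqrt_nonneg _
  have hInn : 0 ≤ ∫ x : ℝ, (‖w x‖ ^ 2 + ‖deriv w x‖ ^ 2) := by
    apply integral_nonneg; intro x; positivity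
  have hNsq : N ^ 2 = ∫ x : ℝ, (‖w x‖ ^ 2 + ‖deriv w x‖ ^ 2) := Real.sq_sqrt hInn
  have hsup : ∀ x, ‖w x‖ ^ 2 ≤ N ^ 2 := by
    intro x; rw [hNsq]; exact sup_sq_le w hw1 hw2 hw3 x
  have hwle : ∀ x, ‖w x‖ ≤ N := by
    intro x
    have := Real.sqrt_le_sqrt (hsup x)
    rwa [Real.sqrt_sq (norm_nonneg _), Real.sqrt_sq hN0] at this
  -- integrability of powers of ‖w‖
  have iw3 : Integrable (fun x => ‖w x‖ ^ 3) := by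
    refine (hw2.const_mul N).mono' ((hcw.norm.pow 3).aestronglyMeasurable) ?_
    filter_upwards with x
    try simp only [Pi.add_apply]
    rw [Real.norm_eq_abs, abs_of_nonneg (by positivity)]
    calc ‖w x‖ ^ 3 = ‖w x‖ * ‖w x‖ ^ 2 := by ring
      _ ≤ N * ‖w x‖ ^ 2 := by
          apply mul_le_mul_of_nonneg_right (hwle x) (by positivity)
  have iw4 : Integrable (fun x => ‖w x‖ ^ 4) := by
    refine (hw2.const_mul (N ^ 2)).mono' ((hcw.norm.pow 4).aestronglyMeasurable) ?_
    filter_upwards with x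
    try simp only [Pi.add_apply]
    rw [Real.norm_eq_abs, abs_of_nonneg (by positivity)]
    calc ‖w x‖ ^ 4 = ‖w x‖ ^ 2 * ‖w x‖ ^ 2 := by ring
      _ ≤ N ^ 2 * ‖w x‖ ^ 2 := by
          apply mul_le_mul_of_nonneg_right (hsup x) (by positivity)
  -- the functions F and G
  set r : ℝ → ℝ := fun x => (w x).re with hrdef
  set r' : ℝ → ℝ := fun x => (deriv w x).re with hr'def
  have hrD : ∀ x, HasDerivAt r (r' x) x :=
    fun x => Complex.reCLM.hasFDerivAt.comp_hasDerivAt x (hd x)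
  have habs_r : ∀ x, |r x| ≤ ‖w x‖ := fun x => Complex.abs_re_le_norm (w x)
  -- cancellation
  have I1 : Integrable (fun x => ηd x * r' x) := by
    refine (integrable_η.add hw3).mono'
      (((continuous_ηd.mul (Complex.continuous_re.comp hcw')).aestronglyMeasurable)) ?_
    filter_upwards with x
    try simp only [Pi.add_apply]
    rw [Real.norm_eq_abs, abs_mul]
    have h1 := abs_ηd_le x
    have h2 : |r' x| ≤ ‖deriv w x‖ := Complex.abs_re_le_norm _
    have h3 := η_le_one x
    have h4 := η_nonneg x
    nlinarith [abs_nonneg (ηd x), abs_nonneg (r' x), sq_nonneg (|ηd x| - |r' x|),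
      norm_nonneg (deriv w x), mul_le_mul h1 h1 (abs_nonneg _) h4,
      mul_le_mul h2 h2 (abs_nonneg _) (norm_nonneg _),
      mul_nonneg h4 h4, mul_le_mul_of_nonneg_left h3 h4]
  have I2 : Integrable (fun x => (η x - 2 * η x ^ 3) * r x) := by
    refine (integrable_η.const_mul (3 * N)).mono'
      ((((continuous_η.sub (continuous_const.mul (continuous_η.pow 3))).mul
        (Complex.continuous_re.comp hcw)).aestronglyMeasurable)) ?_
    filter_upwards with x
    try simp only [Pi.add_apply]
    rw [Real.norm_eq_abs, abs_mul]
    have h1 := η_le_one x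
    have h2 := η_nonneg x
    have hcube : η x ^ 3 ≤ η x := by
      nlinarith [mul_nonneg (mul_nonneg h2 (sub_nonneg.mpr h1))
        (by linarith : (0:ℝ) ≤ 1 + η x)]
    have h3 : |η x - 2 * η x ^ 3| ≤ 3 * η x := by
      rw [abs_le]
      constructor <;> nlinarith [pow_nonneg h2 3]
    have h4 : |r x| ≤ N := (habs_r x).trans (hwle x)
    calc |η x - 2 * η x ^ 3| * |r x| ≤ (3 * η x) * N :=
          mul_le_mul h3 h4 (abs_nonneg _) (by positivity)
      _ = 3 * N * η x := by ring
  have I3 : Integrable (fun x => ηd x * r x) := by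
    refine (integrable_η.const_mul N).mono'
      ((continuous_ηd.mul (Complex.continuous_re.comp hcw)).aestronglyMeasurable) ?_
    filter_upwards with x
    try simp only [Pi.add_apply]
    rw [Real.norm_eq_abs, abs_mul]
    have h4 : |r x| ≤ N := (habs_r x).trans (hwle x)
    calc |ηd x| * |r x| ≤ η x * N :=
          mul_le_mul (abs_ηd_le x) h4 (abs_nonneg _) (η_nonneg x)
      _ = N * η x := by ring
  have IBP : ∫ x : ℝ, ηd x * r' x = - ∫ x : ℝ, (η x - 2 * η x ^ 3) * r x :=
    integral_mul_deriv_eq_deriv_mul_of_integrable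
      (fun x _ => hasDerivAt_ηd x) (fun x _ => hrD x) I1 I2 I3
  have hcancel : (∫ x : ℝ, (deriv η x * (deriv w x).re - 2 * η x ^ 3 * (w x).re
      + η x * (w x).re)) = 0 := by
    have heq : (fun x : ℝ => (deriv η x * (deriv w x).re - 2 * η x ^ 3 * (w x).re
        + η x * (w x).re)) = fun x => ηd x * r' x + (η x - 2 * η x ^ 3) * r x := by
      funext x; rw [deriv_η]; simp only [hrdef, hr'def]; ring
    rw [heq, integral_add I1 I2, IBP]
    ring
  -- derivatives of F and G
  have hdF : ∀ x, HasDerivAt (fun y : ℝ => (η y : ℂ) + w y) ((ηd x : ℂ) + deriv w x) x := by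
    intro x
    exact ((Complex.ofRealCLM.hasFDerivAt.comp_hasDerivAt x (hasDerivAt_η x)).add (hd x))
  have hderivF : deriv (fun y : ℝ => (η y : ℂ) + w y) = fun x => (ηd x : ℂ) + deriv w x :=
    funext fun x => (hdF x).deriv
  have hderivG : deriv (fun y : ℝ => ((η y : ℝ) : ℂ)) = fun x => ((ηd x : ℝ) : ℂ) :=
    funext fun x => (Complex.ofRealCLM.hasFDerivAt.comp_hasDerivAt x (hasDerivAt_η x)).deriv
  -- the three integrability claims
  have A1 : Integrable (fun x : ℝ => ‖deriv (fun y : ℝ => (η y : ℂ) + w y) x‖ ^ 2) := by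
    rw [hderivF]
    refine ((integrable_η.add hw3).const_mul 2).mono'
      ((((Complex.continuous_ofReal.comp continuous_ηd).add hcw').norm.pow 2).aestronglyMeasurable) ?_
    filter_upwards with x
    try simp only [Pi.add_apply]
    rw [Real.norm_eq_abs, abs_of_nonneg (by positivity)]
    have h1 : ‖(ηd x : ℂ) + deriv w x‖ ≤ |ηd x| + ‖deriv w x‖ := by
      refine (norm_add_le _ _).trans ?_
      rw [Complex.norm_real, Real.norm_eq_abs]
    have h2 := abs_ηd_le x
    have h3 := η_le_one x
    have h4 := η_nonneg x
    nlinarith [norm_nonneg ((ηd x : ℂ) + deriv w x), abs_nonneg (ηd x),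
      norm_nonneg (deriv w x), sq_nonneg (|ηd x| - ‖deriv w x‖)]
  have A2 : Integrable (fun x : ℝ => ‖(η x : ℂ) + w x‖ ^ 4) := by
    refine ((integrable_η.add iw4).const_mul 8).mono'
      ((((Complex.continuous_ofReal.comp continuous_η).add hcw).norm.pow 4).aestronglyMeasurable) ?_
    filter_upwards with x
    try simp only [Pi.add_apply]
    rw [Real.norm_eq_abs, abs_of_nonneg (by positivity)]
    have h1 : ‖(η x : ℂ) + w x‖ ≤ η x + ‖w x‖ := by
      refine (norm_add_le _ _).trans ?_
      rw [Complex.norm_real, Real.norm_eq_abs, abs_of_nonneg (η_nonneg x)]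
    have h3 := η_le_one x
    have h4 := η_nonneg x
    have h5 : ‖(η x : ℂ) + w x‖ ^ 4 ≤ (η x + ‖w x‖) ^ 4 := by
      apply pow_le_pow_left₀ (norm_nonneg _) h1
    have h6 : (η x + ‖w x‖) ^ 4 ≤ 8 * η x ^ 4 + 8 * ‖w x‖ ^ 4 := by
      nlinarith [mul_nonneg (sq_nonneg (η x - ‖w x‖))
        (by nlinarith [sq_nonneg (η x + ‖w x‖), sq_nonneg (η x), sq_nonneg (‖w x‖)] :
          (0:ℝ) ≤ 7 * η x ^ 2 + 10 * (η x * ‖w x‖) + 7 * ‖w x‖ ^ 2)]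
    have h7 : η x ^ 4 ≤ η x := by
      simpa using pow_le_pow_of_le_one h4 h3 (by norm_num : 1 ≤ 4)
    nlinarith
  have A3 : Integrable (fun x : ℝ => ‖(η x : ℂ) + w x‖ ^ 2) := by
    refine ((integrable_η.add hw2).const_mul 2).mono'
      ((((Complex.continuous_ofReal.comp continuous_η).add hcw).norm.pow 2).aestronglyMeasurable) ?_
    filter_upwards with x
    try simp only [Pi.add_apply]
    rw [Real.norm_eq_abs, abs_of_nonneg (by positivity)]
    have h1 : ‖(η x : ℂ) + w x‖ ≤ η x + ‖w x‖ := by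
      refine (norm_add_le _ _).trans ?_
      rw [Complex.norm_real, Real.norm_eq_abs, abs_of_nonneg (η_nonneg x)]
    have h3 := η_le_one x
    have h4 := η_nonneg x
    nlinarith [norm_nonneg ((η x : ℂ) + w x), norm_nonneg (w x),
      sq_nonneg (η x - ‖w x‖)]
  refine ⟨A1, A2, A3, hcancel, ?_⟩
  -- names for the two energy integrands
  set P : ℝ → ℝ := fun x =>
    ‖deriv (fun y : ℝ => (η y : ℂ) + w y) x‖ ^ 2 - ‖(η x : ℂ) + w x‖ ^ 4
      + ‖(η x : ℂ) + w x‖ ^ 2 with hPdef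
  set Q : ℝ → ℝ := fun x =>
    ‖deriv (fun y : ℝ => ((η y : ℝ) : ℂ)) x‖ ^ 2 - ‖((η x : ℝ) : ℂ)‖ ^ 4
      + ‖((η x : ℝ) : ℂ)‖ ^ 2 with hQdef
  have h4abs : ∀ t : ℝ, |t| ^ 4 = t ^ 4 := by
    intro t; rw [pow_abs, abs_of_nonneg (by positivity)]
  have hQeq : Q = fun x => ηd x ^ 2 - η x ^ 4 + η x ^ 2 := by
    funext x
    simp only [hQdef, hderivG, Complex.norm_real, Real.norm_eq_abs, sq_abs, h4abs]
  have iηd2 : Integrable (fun x => ηd x ^ 2) := by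
    refine integrable_η.mono' ((continuous_ηd.pow 2).aestronglyMeasurable) ?_
    filter_upwards with x
    rw [Real.norm_eq_abs, abs_of_nonneg (sq_nonneg _)]
    have h1 := abs_ηd_le x
    have h2 := η_le_one x
    have h3 := η_nonneg x
    nlinarith [abs_nonneg (ηd x), sq_abs (ηd x)]
  have iQ : Integrable Q := by
    rw [hQeq]
    exact (iηd2.sub (integrable_η_pow 4 (by norm_num))).add
      (integrable_η_pow 2 (by norm_num))
  have iP : Integrable P := (A1.sub A2).add A3
  set L : ℝ → ℝ := fun x => ηd x * r' x + (η x - 2 * η x ^ 3) * r x with hLdef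
  have iL : Integrable L := I1.add I2
  have hL0 : ∫ x : ℝ, L x = 0 := by
    simp only [hLdef]
    rw [integral_add I1 I2, IBP]; ring
  set R : ℝ → ℝ := fun x => ‖deriv w x‖ ^ 2 + ‖w x‖ ^ 2 - 4 * η x ^ 2 * r x ^ 2
    - 2 * η x ^ 2 * ‖w x‖ ^ 2 - 4 * η x * r x * ‖w x‖ ^ 2 - ‖w x‖ ^ 4 with hRdef
  have hPQ : ∀ x, P x - Q x = 2 * L x + R x := by
    intro x
    simp only [hPdef, hQdef, hRdef, hLdef, hrdef, hr'def, hderivF, hderivG,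
      norm_sq_eq, norm_pow4_eq, Complex.add_re, Complex.add_im,
      Complex.ofReal_re, Complex.ofReal_im]
    ring
  have iR : Integrable R := by
    have hfun : R = fun x => (P x - Q x) - 2 * L x := by
      funext x; have := hPQ x; linarith
    rw [hfun]
    exact (iP.sub iQ).sub (iL.const_mul 2)
  have hsplit : ∫ x : ℝ, (P x - Q x) = ∫ x : ℝ, R x := by
    calc ∫ x : ℝ, (P x - Q x) = ∫ x : ℝ, (2 * L x + R x) :=
          integral_congr_ae (Filter.Eventually.of_forall fun x => hPQ x)
      _ = (∫ x : ℝ, 2 * L x) + ∫ x : ℝ, R x := integral_add (iL.const_mul 2) iR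
      _ = 2 * (∫ x : ℝ, L x) + ∫ x : ℝ, R x := by rw [integral_const_mul]
      _ = ∫ x : ℝ, R x := by rw [hL0]; ring
  have hΔ : energyE (fun x : ℝ => (η x : ℂ) + w x) - energyE (fun x : ℝ => (η x : ℂ))
      = (1 / 4) * ∫ x : ℝ, R x := by
    have e1 : energyE (fun x : ℝ => (η x : ℂ) + w x) = (1 / 4) * ∫ x : ℝ, P x := rfl
    have e2 : energyE (fun x : ℝ => (η x : ℂ)) = (1 / 4) * ∫ x : ℝ, Q x := rfl
    rw [e1, e2, ← mul_sub, ← integral_sub iP iQ, hsplit]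
  -- the final bound
  have hadd : ∫ x : ℝ, (‖w x‖ ^ 2 + ‖deriv w x‖ ^ 2)
      = (∫ x : ℝ, ‖w x‖ ^ 2) + ∫ x : ℝ, ‖deriv w x‖ ^ 2 := integral_add hw2 hw3
  have hIw0 : 0 ≤ ∫ x : ℝ, ‖w x‖ ^ 2 := integral_nonneg fun x => by positivity
  have hIw'0 : 0 ≤ ∫ x : ℝ, ‖deriv w x‖ ^ 2 := integral_nonneg fun x => by positivity
  have hIw : ∫ x : ℝ, ‖w x‖ ^ 2 ≤ N ^ 2 := by rw [hNsq, hadd]; linarith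
  have hIw' : ∫ x : ℝ, ‖deriv w x‖ ^ 2 ≤ N ^ 2 := by rw [hNsq, hadd]; linarith
  set B : ℝ → ℝ := fun x => ‖deriv w x‖ ^ 2 + (7 + 4 * N + N ^ 2) * ‖w x‖ ^ 2 with hBdef
  have iB : Integrable B := hw3.add (hw2.const_mul _)
  have hRB : ∀ x, |R x| ≤ B x := by
    intro x
    simp only [hRdef, hBdef]
    have h1 := η_nonneg x
    have h2 := η_le_one x
    have h3 := habs_r x
    have h4 := hwle x
    have h5 : (0:ℝ) ≤ ‖w x‖ := norm_nonneg _
    have hc2 : r x ^ 2 ≤ ‖w x‖ ^ 2 := by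
      rw [← sq_abs]; exact pow_le_pow_left₀ (abs_nonneg _) h3 2
    have hη2 : η x ^ 2 ≤ 1 := by nlinarith
    have h7 : η x ^ 2 * r x ^ 2 ≤ ‖w x‖ ^ 2 := by nlinarith [sq_nonneg (r x)]
    have h8 : η x ^ 2 * ‖w x‖ ^ 2 ≤ ‖w x‖ ^ 2 := by nlinarith [sq_nonneg ‖w x‖]
    have h9 : |η x * r x * ‖w x‖ ^ 2| ≤ N * ‖w x‖ ^ 2 := by
      rw [abs_mul, abs_mul, abs_of_nonneg h1, abs_of_nonneg (by positivity : (0:ℝ) ≤ ‖w x‖ ^ 2)]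
      have : η x * |r x| ≤ 1 * N := by
        apply mul_le_mul h2 (h3.trans h4) (abs_nonneg _) zero_le_one
      nlinarith [sq_nonneg ‖w x‖]
    obtain ⟨h9a, h9b⟩ := abs_le.mp h9
    have hW2 : ‖w x‖ ^ 4 ≤ N ^ 2 * ‖w x‖ ^ 2 := by
      have := mul_le_mul_of_nonneg_right (hsup x) (by positivity : (0:ℝ) ≤ ‖w x‖ ^ 2)
      nlinarith
    have p1 : (0:ℝ) ≤ η x ^ 2 * r x ^ 2 := by positivity
    have p2 : (0:ℝ) ≤ η x ^ 2 * ‖w x‖ ^ 2 := by positivity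
    have p3 : (0:ℝ) ≤ ‖w x‖ ^ 4 := by positivity
    have p4 : (0:ℝ) ≤ N ^ 2 * ‖w x‖ ^ 2 := by positivity
    have p5 : (0:ℝ) ≤ ‖deriv w x‖ ^ 2 := by positivity
    have p6 : (0:ℝ) ≤ ‖w x‖ ^ 2 := by positivity
    have p7 : (0:ℝ) ≤ N * ‖w x‖ ^ 2 := by positivity
    rw [abs_le]
    constructor <;> linarith
  have habsR : |∫ x : ℝ, R x| ≤ ∫ x : ℝ, B x := by
    have step1 : |∫ x : ℝ, R x| ≤ ∫ x : ℝ, |R x| := by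
      rw [← Real.norm_eq_abs]
      refine (norm_integral_le_integral_norm _).trans ?_
      simp [Real.norm_eq_abs]
    refine step1.trans ?_
    exact integral_mono iR.abs iB hRB
  have hintB : ∫ x : ℝ, B x
      = (∫ x : ℝ, ‖deriv w x‖ ^ 2) + (7 + 4 * N + N ^ 2) * ∫ x : ℝ, ‖w x‖ ^ 2 := by
    simp only [hBdef]
    rw [integral_add hw3 (hw2.const_mul _), integral_const_mul]
  have hc : (7 + 4 * N + N ^ 2) * (∫ x : ℝ, ‖w x‖ ^ 2) ≤ (7 + 4 * N + N ^ 2) * N ^ 2 :=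
    mul_le_mul_of_nonneg_left hIw (by positivity)
  rw [hΔ, abs_mul, abs_of_pos (by norm_num : (0:ℝ) < 1 / 4)]
  have hfin : |∫ x : ℝ, R x| ≤ 8 * N ^ 2 + 4 * N ^ 3 + N ^ 4 := by
    rw [hintB] at habsR
    nlinarith [hIw', hN0, hc]
  nlinarith [abs_nonneg (∫ x : ℝ, R x), hfin, hN0, pow_nonneg hN0 2, pow_nonneg hN0 3,
    pow_nonneg hN0 4]
end
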